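/- Let λ > 0. There exist constants K₀ > 0 and c > 0, depending only on λ, with the following property. Let t₀ ∈ ℝ, let K ∈ (0, K₀], let Q : ℝ → ℝ be continuous with −λ² ≤ Q(t) ≤ −λ² + K·e^{2(t−t₀)} for all t ≤ t₀, and let v be a C² solution of v''(t) + Q(t)·v(t) = 0 on (−∞, t₀] with v(t₀) = e^{−λ t₀} and v'(t₀) = −λ·e^{−λ t₀}. Then for every t ≤ t₀: (1 − cK)·e^{−λ t} ≤ v(t) ≤ (1 + cK)·e^{−λ t} and −λ(1 + cK)·e^{−λ t} ≤ v'(t) ≤ −λ(1 − cK)·e^{−λ t}. -/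

import Mathlib

open MeasureTheory intervalIntegral Set

set_option maxHeartbeats 2000000 in
/-- Estimates for solutions of `v'' + Q v = 0` when the potential `Q` is a
small perturbation of the negative constant `-λ²` on `(-∞, t₀]`: the solution
with data `v(t₀) = e^{-λt₀}`, `v'(t₀) = -λe^{-λt₀}` stays comparable to
`e^{-λt}` together with its derivative. -/
theorem stmt_16 (lam : ℝ) (hlam : 0 < lam) :
    ∃ K₀ : ℝ, 0 < K₀ ∧ ∃ c : ℝ, 0 < c ∧
      ∀ (t₀ K : ℝ) (Q v : ℝ → ℝ),
        0 < K → K ≤ K₀ →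
        Continuous Q →
        (∀ t : ℝ, t ≤ t₀ →
          -lam ^ 2 ≤ Q t ∧ Q t ≤ -lam ^ 2 + K * Real.exp (2 * (t - t₀))) →
        (∀ t : ℝ, t ≤ t₀ → DifferentiableAt ℝ v t) →
        (∀ t : ℝ, t ≤ t₀ → DifferentiableAt ℝ (deriv v) t) →
        (∀ t : ℝ, t ≤ t₀ → deriv (deriv v) t + Q t * v t = 0) →
        v t₀ = Real.exp (-lam * t₀) →
        deriv v t₀ = -lam * Real.exp (-lam * t₀) →
        ∀ t : ℝ, t ≤ t₀ →
          (1 - c * K) * Real.exp (-lam * t) ≤ v t ∧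
          v t ≤ (1 + c * K) * Real.exp (-lam * t) ∧
          -lam * (1 + c * K) * Real.exp (-lam * t) ≤ deriv v t ∧
          deriv v t ≤ -lam * (1 - c * K) * Real.exp (-lam * t) := by
  obtain ⟨μ, hμdef⟩ : ∃ μ : ℝ, μ = min 1 lam := ⟨_, rfl⟩
  have hμ : 0 < μ := hμdef ▸ lt_min one_pos hlam
  have hμ1 : μ ≤ 1 := hμdef ▸ min_le_left _ _
  have hmulam : μ ≤ lam := hμdef ▸ min_le_right _ _
  refine ⟨μ ^ 2 / 2, by positivity, 2 / (lam * μ) + 4 / μ ^ 2, by positivity, ?_⟩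
  intro t₀ K Q v hK hKK₀ hQc hQ hv1 hv2 hode hv0 hdv0 t ht
  have hEpos : ∀ x : ℝ, 0 < Real.exp x := fun x => Real.exp_pos x
  -- derivative of g(s) = (v' + λ v) e^{-λ s}
  have hg : ∀ s, s ≤ t₀ → HasDerivAt (fun r => (deriv v r + lam * v r) * Real.exp (-lam * r))
      (-((Q s + lam ^ 2) * v s * Real.exp (-lam * s))) s := by
    intro s hs
    have ha : HasDerivAt (fun r => deriv v r + lam * v r)
        (deriv (deriv v) s + lam * deriv v s) s :=
      (hv2 s hs).hasDerivAt.add ((hv1 s hs).hasDerivAt.const_mul lam)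
    have h0 : HasDerivAt (fun r : ℝ => -lam * r) (-lam) s := by
      simpa using (hasDerivAt_id s).const_mul (-lam)
    have := ha.mul h0.exp
    refine this.congr_deriv ?_
    have h3 : deriv (deriv v) s = -(Q s * v s) := by linarith [hode s hs]
    rw [h3]; ring
  -- derivative of u(s) = v e^{λ s}
  have hu : ∀ s, s ≤ t₀ → HasDerivAt (fun r => v r * Real.exp (lam * r))
      ((deriv v s + lam * v s) * Real.exp (lam * s)) s := by
    intro s hs
    have h0 : HasDerivAt (fun r : ℝ => lam * r) lam s := by
      simpa using (hasDerivAt_id s).const_mul lam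
    have := (hv1 s hs).hasDerivAt.mul h0.exp
    refine this.congr_deriv ?_
    ring
  have hexpc : ∀ a : ℝ, Continuous (fun s : ℝ => Real.exp (a * s)) := fun a =>
    Real.continuous_exp.comp (continuous_const.mul continuous_id)
  have hintQv : ∀ r, r ≤ t₀ → IntervalIntegrable
      (fun s => (Q s + lam ^ 2) * v s * Real.exp (-lam * s)) volume r t₀ := by
    intro r hr
    apply ContinuousOn.intervalIntegrable
    rw [Set.uIcc_of_le hr]
    intro s hs
    exact (((hQc.continuousAt.add continuousAt_const).mul (hv1 s hs.2).continuousAt).mul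
      ((hexpc (-lam)).continuousAt)).continuousWithinAt
  have hintu' : ∀ r, r ≤ t₀ → IntervalIntegrable
      (fun s => (deriv v s + lam * v s) * Real.exp (lam * s)) volume r t₀ := by
    intro r hr
    apply ContinuousOn.intervalIntegrable
    rw [Set.uIcc_of_le hr]
    intro s hs
    exact (((hv2 s hs.2).continuousAt.add ((hv1 s hs.2).continuousAt.const_mul lam)).mul
      ((hexpc lam).continuousAt)).continuousWithinAt
  -- integral identity for g
  have keyg : ∀ r, r ≤ t₀ → (deriv v r + lam * v r) * Real.exp (-lam * r)
      = ∫ s in r..t₀, (Q s + lam ^ 2) * v s * Real.exp (-lam * s) := by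
    intro r hr
    have hftc := intervalIntegral.integral_eq_sub_of_hasDerivAt
      (f := fun r => (deriv v r + lam * v r) * Real.exp (-lam * r))
      (f' := fun s => -((Q s + lam ^ 2) * v s * Real.exp (-lam * s)))
      (fun x hx => hg x (by rw [Set.uIcc_of_le hr] at hx; exact hx.2))
      ((hintQv r hr).neg)
    have h0 : (deriv v t₀ + lam * v t₀) * Real.exp (-lam * t₀) = 0 := by
      rw [hv0, hdv0]; ring
    rw [intervalIntegral.integral_neg] at hftc
    have hftc2 : -(∫ s in r..t₀, (Q s + lam ^ 2) * v s * Real.exp (-lam * s))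
        = (deriv v t₀ + lam * v t₀) * Real.exp (-lam * t₀)
          - (deriv v r + lam * v r) * Real.exp (-lam * r) := hftc
    linarith [hftc2, h0]
  -- maximum of |u| on [t, t₀]
  have hIcc : (Set.Icc t t₀).Nonempty := Set.nonempty_Icc.mpr ht
  have hconU : ContinuousOn (fun s => |v s * Real.exp (lam * s)|) (Set.Icc t t₀) := by
    intro s hs
    exact (((hv1 s hs.2).continuousAt.mul ((hexpc lam).continuousAt)).abs).continuousWithinAt
  obtain ⟨s₀, hs₀, hmax⟩ := isCompact_Icc.exists_isMaxOn hIcc hconU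
  obtain ⟨M, hMdef⟩ : ∃ M : ℝ, M = |v s₀ * Real.exp (lam * s₀)| := ⟨_, rfl⟩
  have hM0 : 0 ≤ M := hMdef ▸ abs_nonneg _
  have hMb : ∀ s ∈ Set.Icc t t₀, |v s * Real.exp (lam * s)| ≤ M := fun s hs => hMdef ▸ hmax hs
  -- estimate on u'
  have estA : ∀ r ∈ Set.Icc t t₀, |(deriv v r + lam * v r) * Real.exp (lam * r)|
      ≤ K * M / μ * Real.exp (μ * (r - t₀)) := by
    intro r hr
    have hrt₀ : r ≤ t₀ := hr.2
    have hb : ∀ x ∈ Set.uIoc r t₀, ‖(Q x + lam ^ 2) * v x * Real.exp (-lam * x)‖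
        ≤ K * M * Real.exp (2 * μ * (r - t₀) - 2 * lam * r) := by
      intro x hx
      rw [Set.uIoc_of_le hrt₀] at hx
      have hxm : x ∈ Set.Icc t t₀ := ⟨le_trans hr.1 hx.1.le, hx.2⟩
      have hQx := hQ x hx.2
      have hQ0 : 0 ≤ Q x + lam ^ 2 := by linarith [hQx.1]
      have hQ1 : Q x + lam ^ 2 ≤ K * Real.exp (2 * (x - t₀)) := by linarith [hQx.2]
      have key1 : |v x| * Real.exp (-lam * x) ≤ M * Real.exp (-2 * lam * x) := by
        have h3 := hMb x hxm
        rw [abs_mul, abs_of_pos (hEpos _)] at h3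
        calc |v x| * Real.exp (-lam * x)
            = (|v x| * Real.exp (lam * x)) * Real.exp (-2 * lam * x) := by
              rw [mul_assoc, ← Real.exp_add]; ring_nf
          _ ≤ M * Real.exp (-2 * lam * x) :=
              mul_le_mul_of_nonneg_right h3 (Real.exp_pos _).le
      have expcmp : Real.exp (2 * (x - t₀)) * Real.exp (-2 * lam * x)
          ≤ Real.exp (2 * μ * (r - t₀) - 2 * lam * r) := by
        rw [← Real.exp_add]
        apply Real.exp_le_exp.mpr
        nlinarith [hx.1.le, hx.2, hμ1, hmulam, hμ.le]
      rw [Real.norm_eq_abs, abs_mul, abs_mul, abs_of_nonneg hQ0, abs_of_pos (hEpos _)]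
      calc (Q x + lam ^ 2) * |v x| * Real.exp (-lam * x)
          ≤ (K * Real.exp (2 * (x - t₀))) * (|v x| * Real.exp (-lam * x)) := by
            rw [mul_assoc]
            exact mul_le_mul_of_nonneg_right hQ1 (by positivity)
        _ ≤ (K * Real.exp (2 * (x - t₀))) * (M * Real.exp (-2 * lam * x)) :=
            mul_le_mul_of_nonneg_left key1 (by positivity)
        _ = K * M * (Real.exp (2 * (x - t₀)) * Real.exp (-2 * lam * x)) := by ring
        _ ≤ K * M * Real.exp (2 * μ * (r - t₀) - 2 * lam * r) :=
            mul_le_mul_of_nonneg_left expcmp (by positivity)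
    have hI := intervalIntegral.norm_integral_le_of_norm_le_const hb
    rw [← keyg r hrt₀, Real.norm_eq_abs] at hI
    have habs : |t₀ - r| = t₀ - r := abs_of_nonneg (by linarith)
    rw [habs] at hI
    have hsplit : |(deriv v r + lam * v r) * Real.exp (lam * r)|
        = |(deriv v r + lam * v r) * Real.exp (-lam * r)| * Real.exp (2 * lam * r) := by
      rw [abs_mul, abs_mul, abs_of_pos (hEpos _), abs_of_pos (hEpos _), mul_assoc,
        ← Real.exp_add]
      ring_nf
    have hxe : (t₀ - r) * Real.exp (2 * μ * (r - t₀)) ≤ Real.exp (μ * (r - t₀)) / μ := by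
      have h1 : μ * (t₀ - r) ≤ Real.exp (μ * (t₀ - r)) := by
        have := Real.add_one_le_exp (μ * (t₀ - r)); linarith
      have h2 : (t₀ - r) ≤ Real.exp (μ * (t₀ - r)) / μ := by
        rw [le_div_iff₀ hμ]; nlinarith
      calc (t₀ - r) * Real.exp (2 * μ * (r - t₀))
          ≤ (Real.exp (μ * (t₀ - r)) / μ) * Real.exp (2 * μ * (r - t₀)) :=
            mul_le_mul_of_nonneg_right h2 (Real.exp_pos _).le
        _ = Real.exp (μ * (t₀ - r) + 2 * μ * (r - t₀)) / μ := by
            rw [div_mul_eq_mul_div, ← Real.exp_add]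
        _ = Real.exp (μ * (r - t₀)) / μ := by ring_nf
    calc |(deriv v r + lam * v r) * Real.exp (lam * r)|
        = |(deriv v r + lam * v r) * Real.exp (-lam * r)| * Real.exp (2 * lam * r) := hsplit
      _ ≤ (K * M * Real.exp (2 * μ * (r - t₀) - 2 * lam * r) * (t₀ - r))
            * Real.exp (2 * lam * r) :=
          mul_le_mul_of_nonneg_right hI (Real.exp_pos _).le
      _ = K * M * ((t₀ - r) * (Real.exp (2 * μ * (r - t₀) - 2 * lam * r)
            * Real.exp (2 * lam * r))) := by ring
      _ = K * M * ((t₀ - r) * Real.exp (2 * μ * (r - t₀))) := by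
          rw [← Real.exp_add]; ring_nf
      _ ≤ K * M * (Real.exp (μ * (r - t₀)) / μ) :=
          mul_le_mul_of_nonneg_left hxe (by positivity)
      _ = K * M / μ * Real.exp (μ * (r - t₀)) := by ring
  -- integral of exponential majorant
  have hintexp : ∀ r : ℝ, IntervalIntegrable
      (fun s => K * M / μ * Real.exp (μ * (s - t₀))) volume r t₀ := fun r =>
    (Continuous.intervalIntegrable (by fun_prop) r t₀)
  have hexpint : ∀ r, r ≤ t₀ →
      (∫ s in r..t₀, K * M / μ * Real.exp (μ * (s - t₀))) ≤ K * M / μ ^ 2 := by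
    intro r hr
    have hF : ∀ s ∈ Set.uIcc r t₀,
        HasDerivAt (fun y => K * M / μ * (Real.exp (μ * (y - t₀)) / μ))
          (K * M / μ * Real.exp (μ * (s - t₀))) s := by
      intro s _
      have h0 : HasDerivAt (fun y : ℝ => μ * (y - t₀)) μ s := by
        simpa using ((hasDerivAt_id s).sub_const t₀).const_mul μ
      have := (h0.exp.div_const μ).const_mul (K * M / μ)
      refine this.congr_deriv ?_
      rw [mul_div_cancel_right₀ _ hμ.ne']
    rw [intervalIntegral.integral_eq_sub_of_hasDerivAt hF (hintexp r)]
    have h2 : 0 < Real.exp (μ * (r - t₀)) := hEpos _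
    have h3 : Real.exp (μ * (t₀ - t₀)) = 1 := by norm_num
    rw [h3]
    have h4 : K * M / μ * (1 / μ) = K * M / μ ^ 2 := by
      rw [mul_one_div, div_div, ← pow_two]
    have h5 : 0 ≤ K * M / μ * (Real.exp (μ * (r - t₀)) / μ) := by positivity
    linarith
  -- estimate on u - 1
  have estB : ∀ r ∈ Set.Icc t t₀, |v r * Real.exp (lam * r) - 1| ≤ K * M / μ ^ 2 := by
    intro r hr
    have hrt₀ : r ≤ t₀ := hr.2
    have hftc := intervalIntegral.integral_eq_sub_of_hasDerivAt
      (f := fun r => v r * Real.exp (lam * r))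
      (f' := fun s => (deriv v s + lam * v s) * Real.exp (lam * s))
      (fun x hx => hu x (by rw [Set.uIcc_of_le hrt₀] at hx; exact hx.2))
      (hintu' r hrt₀)
    have hftc2 : (∫ s in r..t₀, (deriv v s + lam * v s) * Real.exp (lam * s))
        = v t₀ * Real.exp (lam * t₀) - v r * Real.exp (lam * r) := hftc
    have hu1 : v t₀ * Real.exp (lam * t₀) = 1 := by
      rw [hv0, ← Real.exp_add]
      norm_num
    have h2 : |v r * Real.exp (lam * r) - 1|
        = ‖∫ s in r..t₀, (deriv v s + lam * v s) * Real.exp (lam * s)‖ := by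
      rw [hftc2, hu1, Real.norm_eq_abs, abs_sub_comm]
    rw [h2]
    have hbd : ∀ᵐ x ∂(volume.restrict (Set.uIoc r t₀)),
        ‖(deriv v x + lam * v x) * Real.exp (lam * x)‖
          ≤ K * M / μ * Real.exp (μ * (x - t₀)) := by
      rw [MeasureTheory.ae_restrict_iff' measurableSet_uIoc]
      apply Filter.Eventually.of_forall
      intro x hx
      rw [Set.uIoc_of_le hrt₀] at hx
      have hxm : x ∈ Set.Icc t t₀ := ⟨le_trans hr.1 hx.1.le, hx.2⟩
      rw [Real.norm_eq_abs]
      exact estA x hxm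
    have h3 := intervalIntegral.norm_integral_le_abs_of_norm_le hbd (hintexp r)
    have h4 : 0 ≤ ∫ s in r..t₀, K * M / μ * Real.exp (μ * (s - t₀)) :=
      intervalIntegral.integral_nonneg hrt₀ (fun x _ => by positivity)
    calc ‖∫ s in r..t₀, (deriv v s + lam * v s) * Real.exp (lam * s)‖
        ≤ |∫ s in r..t₀, K * M / μ * Real.exp (μ * (s - t₀))| := h3
      _ = ∫ s in r..t₀, K * M / μ * Real.exp (μ * (s - t₀)) := abs_of_nonneg h4
      _ ≤ K * M / μ ^ 2 := hexpint r hrt₀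
  -- closing the bootstrap: M ≤ 2
  have hM2 : M ≤ 2 := by
    have h1 := estB s₀ hs₀
    have h2 : M - 1 ≤ |v s₀ * Real.exp (lam * s₀) - 1| := by
      have h := abs_sub_abs_le_abs_sub (v s₀ * Real.exp (lam * s₀)) 1
      rw [abs_one, ← hMdef] at h
      linarith
    have h3 : K * M / μ ^ 2 ≤ M / 2 := by
      rw [div_le_div_iff₀ (by positivity) two_pos]
      nlinarith
    linarith
  -- final pointwise bounds at r = t
  have htmem : t ∈ Set.Icc t t₀ := ⟨le_refl t, ht⟩
  have hBt : |v t * Real.exp (lam * t) - 1| ≤ 2 * K / μ ^ 2 := by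
    have h1 := estB t htmem
    have h2 : K * M / μ ^ 2 ≤ 2 * K / μ ^ 2 :=
      (div_le_div_iff_of_pos_right (by positivity)).mpr (by nlinarith)
    linarith
  have hAt : |(deriv v t + lam * v t) * Real.exp (lam * t)| ≤ 2 * K / μ := by
    have h1 := estA t htmem
    have h2 : Real.exp (μ * (t - t₀)) ≤ 1 := Real.exp_le_one_iff.mpr (by nlinarith)
    have h3 : K * M / μ * Real.exp (μ * (t - t₀)) ≤ 2 * K / μ := by
      calc K * M / μ * Real.exp (μ * (t - t₀)) ≤ K * M / μ * 1 :=
            mul_le_mul_of_nonneg_left h2 (by positivity)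
        _ ≤ 2 * K / μ := by
            rw [mul_one]
            exact (div_le_div_iff_of_pos_right hμ).mpr (by nlinarith)
    linarith
  have hE : 0 < Real.exp (-lam * t) := hEpos _
  have hEE : Real.exp (lam * t) * Real.exp (-lam * t) = 1 := by
    rw [← Real.exp_add]; norm_num
  obtain ⟨hB1, hB2⟩ := abs_le.mp hBt
  obtain ⟨hA1, hA2⟩ := abs_le.mp hAt
  obtain ⟨U, hUdef⟩ : ∃ U : ℝ, U = v t * Real.exp (lam * t) := ⟨_, rfl⟩
  obtain ⟨X, hXdef⟩ : ∃ X : ℝ, X = (deriv v t + lam * v t) * Real.exp (lam * t) := ⟨_, rfl⟩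
  rw [← hUdef] at hB1 hB2
  rw [← hXdef] at hA1 hA2
  have hvt : v t = U * Real.exp (-lam * t) := by
    rw [hUdef, mul_assoc, hEE, mul_one]
  have hXE : X * Real.exp (-lam * t) = deriv v t + lam * v t := by
    rw [hXdef, mul_assoc, hEE, mul_one]
  have hUE : U * Real.exp (-lam * t) = v t := by
    rw [hUdef, mul_assoc, hEE, mul_one]
  have hdvt : deriv v t = (X - lam * U) * Real.exp (-lam * t) := by
    have : (X - lam * U) * Real.exp (-lam * t)
        = X * Real.exp (-lam * t) - lam * (U * Real.exp (-lam * t)) := by ring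
    rw [this, hXE, hUE]; ring
  -- arithmetic with the constant c
  have hc1 : 2 * K / μ ^ 2 ≤ (2 / (lam * μ) + 4 / μ ^ 2) * K := by
    have h1 : 0 ≤ 2 / (lam * μ) * K := by positivity
    have h2 : 2 * K / μ ^ 2 ≤ 4 / μ ^ 2 * K := by
      rw [div_mul_eq_mul_div]
      exact (div_le_div_iff_of_pos_right (by positivity)).mpr (by nlinarith)
    linarith [h1, h2, (by ring : (2 / (lam * μ) + 4 / μ ^ 2) * K
      = 2 / (lam * μ) * K + 4 / μ ^ 2 * K)]
  have hc2 : 2 * K / μ + lam * (2 * K / μ ^ 2) ≤ lam * ((2 / (lam * μ) + 4 / μ ^ 2) * K) := by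
    have hlam' : lam ≠ 0 := hlam.ne'
    have hμ' : μ ≠ 0 := hμ.ne'
    have h1 : lam * ((2 / (lam * μ) + 4 / μ ^ 2) * K) = 2 * K / μ + 4 * lam * K / μ ^ 2 := by
      have e : lam * (2 / (lam * μ)) = 2 / μ := by
        rw [← mul_div_assoc]; exact mul_div_mul_left 2 μ hlam'
      calc lam * ((2 / (lam * μ) + 4 / μ ^ 2) * K)
          = lam * (2 / (lam * μ)) * K + lam * (4 / μ ^ 2) * K := by ring
        _ = 2 / μ * K + lam * (4 / μ ^ 2) * K := by rw [e]
        _ = 2 * K / μ + 4 * lam * K / μ ^ 2 := by ring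
    have h2 : lam * (2 * K / μ ^ 2) ≤ 4 * lam * K / μ ^ 2 := by
      have e1 : lam * (2 * K / μ ^ 2) = 2 * lam * K / μ ^ 2 := by ring
      rw [e1]
      exact (div_le_div_iff_of_pos_right (by positivity)).mpr (by nlinarith [mul_pos hlam hK])
    linarith
  have hlamU1 : lam * (U - 1) ≤ lam * (2 * K / μ ^ 2) :=
    mul_le_mul_of_nonneg_left hB2 hlam.le
  have hlamU2 : -(lam * (2 * K / μ ^ 2)) ≤ lam * (U - 1) := by
    have := mul_le_mul_of_nonneg_left hB1 hlam.le
    linarith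
  refine ⟨?_, ?_, ?_, ?_⟩
  · rw [hvt]
    apply mul_le_mul_of_nonneg_right ?_ hE.le
    linarith
  · rw [hvt]
    apply mul_le_mul_of_nonneg_right ?_ hE.le
    linarith
  · rw [hdvt]
    apply mul_le_mul_of_nonneg_right ?_ hE.le
    nlinarith [hA1, hlamU1, hc2]
  · rw [hdvt]
    apply mul_le_mul_of_nonneg_right ?_ hE.le
    nlinarith [hA2, hlamU2, hc2]
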